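/- Let (W,S) be a Coxeter system and π ∈ W. Let Q be a word in S containing two identical adjacent letters at positions p and p+1 (i.e., q_p = q_{p+1}). Let Q' be Q with the letter at position p deleted. Then Δ(Q;π) restricted to faces containing position p is in bijection with Δ(Q';π): T ∈ Δ(Q;π) with p ∈ T if and only if T ∖ {p} (with positions > p shifted down by one) ∈ Δ(Q';π). -/

import Mathlib

/-- The alternating word `i j i j ...` of length `n`. -/
def altWord {B : Type*} (i j : B) : ℕ → List B
  | 0 => []
  | n + 1 => i :: altWord j i n

@[simp] theorem altWord_length {B : Type*} (i j : B) (n : ℕ) :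
    (altWord i j n).length = n := by
  induction n generalizing i j with
  | zero => rfl
  | succ n ih => simp [altWord, ih]

/-- `L` contains a reduced expression of `π` as a (not necessarily contiguous) subword. -/
def containsRed {B W : Type*} [Group W] {M : CoxeterMatrix B} (cs : CoxeterSystem M W)
    (π : W) (L : List B) : Prop :=
  ∃ P : List B, P.Sublist L ∧ cs.IsReduced P ∧ cs.wordProd P = π

/-- The word obtained from `Q` by deleting the letters at the positions in `T`. -/
def cword {B : Type*} (Q : List B) (T : Finset (Fin Q.length)) : List B :=
  ((List.finRange Q.length).filter (fun p => p ∉ T)).map Q.get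

/-- The subword complex `Δ(Q; π)`. -/
def SWC {B W : Type*} [Group W] {M : CoxeterMatrix B} (cs : CoxeterSystem M W)
    (Q : List B) (π : W) : Set (Finset (Fin Q.length)) :=
  {T | containsRed cs π (cword Q T)}

/-- The order-preserving map from positions of `Q` to positions of `Q.eraseIdx p`:
positions `< p` are kept, positions `≥ p` are shifted down by one. -/
def eraseShift {B : Type*} (Q : List B) (p : ℕ) (hp : p + 1 < Q.length)
    (q : Fin Q.length) : Fin (Q.eraseIdx p).length :=
  ⟨if q.val < p then q.val else q.val - 1, by
    rw [show (Q.eraseIdx p).length = Q.length - 1 from by rw [List.eraseIdx_eq_take_drop_succ]; simp; omega]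
    have := q.2
    split <;> omega⟩

theorem range_filter_ne (n p : ℕ) (h : p < n) :
    (List.range n).filter (fun i => decide (i ≠ p)) =
      (List.range (n-1)).map (fun i => if i < p then i else i + 1) := by
  obtain ⟨k, rfl⟩ : ∃ k, n = p + 1 + k := ⟨n - p - 1, by omega⟩
  rw [List.range_add, List.filter_append, List.range_succ, List.filter_append]
  rw [show p + 1 + k - 1 = p + k from by omega, List.range_add, List.map_append]
  congr 1
  · rw [List.filter_eq_self.2 (by simp [List.mem_range]; omega)]
    simp only [List.filter_cons, List.filter_nil]
    rw [if_neg (by simp)]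
    rw [List.append_nil]
    conv_lhs => rw [← List.map_id (List.range p)]
    refine List.map_congr_left ?_
    intro a ha
    rw [List.mem_range] at ha
    simp [if_pos ha]
  · rw [List.filter_eq_self.2 (by simp [List.mem_range]; omega), List.map_map]
    refine List.map_congr_left ?_
    intro a _
    simp only [Function.comp]
    rw [if_neg (by omega)]
    omega

theorem length_eraseIdx' {B : Type*} (Q : List B) (p : ℕ) (hp : p + 1 < Q.length) :
    (Q.eraseIdx p).length = Q.length - 1 := by
  rw [List.length_eraseIdx]; split <;> omega

/-- The inverse skip embedding. -/
def skipEmb {B : Type*} (Q : List B) (p : ℕ) (hp : p + 1 < Q.length)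
    (q : Fin (Q.eraseIdx p).length) : Fin Q.length :=
  ⟨if q.val < p then q.val else q.val + 1, by
    have h1 := q.2; have h2 := length_eraseIdx' Q p hp; split <;> omega⟩

theorem cword_erase {B : Type*} (Q : List B) (p : ℕ) (hp : p + 1 < Q.length)
    (T : Finset (Fin Q.length)) (hpT : (⟨p, Nat.lt_of_succ_lt hp⟩ : Fin Q.length) ∈ T) :
    cword (Q.eraseIdx p) ((T.erase ⟨p, Nat.lt_of_succ_lt hp⟩).image (eraseShift Q p hp)) = cword Q T := by
  classical
  set pfin : Fin Q.length := ⟨p, by omega⟩ with hpfin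
  set T' := (T.erase pfin).image (eraseShift Q p hp) with hT'
  set g := skipEmb Q p hp with hgdef
  -- membership correspondence
  have hq2 : ∀ q' : Fin (Q.eraseIdx p).length, q'.val < Q.length - 1 := by
    intro q'; have := q'.2; have h2 := length_eraseIdx' Q p hp; omega
  have hg_ne : ∀ q', g q' ≠ pfin := by
    intro q'
    simp only [hgdef, skipEmb, hpfin, Ne, Fin.mk.injEq]
    split <;> omega
  have hshift_g : ∀ q', eraseShift Q p hp (g q') = q' := by
    intro q'
    apply Fin.ext
    simp only [hgdef, skipEmb, eraseShift]
    split_ifs <;> simp_all <;> omega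
  have hg_shift : ∀ q : Fin Q.length, q ≠ pfin → g (eraseShift Q p hp q) = q := by
    intro q hq
    have hq' : q.val ≠ p := by simpa [Fin.ext_iff] using hq
    apply Fin.ext
    simp only [hgdef, skipEmb, eraseShift]
    have := q.2
    split_ifs <;> simp_all <;> omega
  have hmem : ∀ q', (q' ∈ T' ↔ g q' ∈ T) := by
    intro q'
    constructor
    · rintro hq'
      rw [hT', Finset.mem_image] at hq'
      obtain ⟨q, hq, rfl⟩ := hq'
      rw [Finset.mem_erase] at hq
      rw [hg_shift q hq.1]
      exact hq.2
    · intro hgq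
      rw [hT', Finset.mem_image]
      exact ⟨g q', Finset.mem_erase.2 ⟨hg_ne q', hgq⟩, hshift_g q'⟩
  -- the get correspondence
  have hget : ∀ q', (Q.eraseIdx p).get q' = Q.get (g q') := by
    intro q'
    simp only [List.get_eq_getElem]
    rw [List.getElem_eraseIdx]
    simp only [hgdef, skipEmb]
    split <;> rfl
  -- now unfold cword
  rw [cword, cword]
  have h1 : ((List.finRange (Q.eraseIdx p).length).filter (fun q => q ∉ T')) =
      (List.finRange (Q.eraseIdx p).length).filter (fun q => g q ∉ T) := by
    refine List.filter_congr ?_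
    intro q _
    simp [hmem q]
  rw [h1]
  have h2 : ((List.finRange (Q.eraseIdx p).length).filter (fun q => g q ∉ T)).map
        (Q.eraseIdx p).get
      = (((List.finRange (Q.eraseIdx p).length).filter (fun q => g q ∉ T)).map g).map
        Q.get := by
    rw [List.map_map]
    exact List.map_congr_left (fun q _ => hget q)
  rw [h2]
  congr 1
  -- remains: map g (filter (g · ∉ T) finRange) = filter (· ∉ T) finRange
  have h3 : ((List.finRange (Q.eraseIdx p).length).filter (fun q => g q ∉ T)).map g
      = ((List.finRange (Q.eraseIdx p).length).map g).filter (fun q => q ∉ T) := by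
    rw [List.filter_map]; rfl
  rw [h3]
  have h4 : (List.finRange (Q.eraseIdx p).length).map g
      = (List.finRange Q.length).filter (fun q => q ≠ pfin) := by
    apply List.map_injective_iff.2 (Fin.val_injective)
    rw [List.map_map]
    have hcomp : (Fin.val ∘ g) = (fun i => if i < p then i else i + 1) ∘ Fin.val := by
      funext q; simp [hgdef, skipEmb]
    have hfun : ((List.finRange Q.length).filter (fun q => decide (q ≠ pfin))).map Fin.val
        = ((List.finRange Q.length).map Fin.val).filter (fun i => decide (i ≠ p)) := by
      rw [List.filter_map]
      congr 1
      refine List.filter_congr ?_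
      intro q _
      simp [Fin.ext_iff, hpfin]
    rw [hcomp, ← List.map_map, (show ∀ n, (List.finRange n).map Fin.val = List.range n from fun n => List.ext_getElem (by simp) (by simp)), hfun, (show ∀ n, (List.finRange n).map Fin.val = List.range n from fun n => List.ext_getElem (by simp) (by simp)),
      range_filter_ne Q.length p (by omega), length_eraseIdx' Q p hp]
  rw [h4, List.filter_filter]
  refine List.filter_congr ?_
  intro q _
  by_cases h : q ∈ T
  · simp [h]
  · have : q ≠ pfin := by rintro rfl; exact h hpT
    simp [h, this]

theorem swc_erase_duplicate_letter {B W : Type*} [Group W] {M : CoxeterMatrix B}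
    (cs : CoxeterSystem M W) (π : W) (Q : List B) (p : ℕ) (hp : p + 1 < Q.length)
    (hq : Q.get ⟨p, by omega⟩ = Q.get ⟨p + 1, hp⟩) :
    ∀ T : Finset (Fin Q.length), (⟨p, by omega⟩ : Fin Q.length) ∈ T →
      (T ∈ SWC cs Q π ↔
        (T.erase ⟨p, by omega⟩).image (eraseShift Q p hp) ∈ SWC cs (Q.eraseIdx p) π) := by
  intro T hpT
  simp only [SWC, Set.mem_setOf_eq, cword_erase Q p hp T hpT]
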